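/- Let (X,r) be a square-free solution of finite order. Then the group G = G(X,r) is a Noetherian group: every subgroup of G is finitely generated. -/

import Mathlib

/-- The left action `σ_x(y)`: first component of `r (x, y)`. -/
def sig {X : Type*} (r : X × X → X × X) (x y : X) : X := (r (x, y)).1

/-- The right action `τ_y(x)`: second component of `r (x, y)`. -/
def tau {X : Type*} (r : X × X → X × X) (y x : X) : X := (r (x, y)).2

/-- `r¹² = r × id`. -/
def r12 {X : Type*} (r : X × X → X × X) : X × X × X → X × X × X :=
  fun t => ((r (t.1, t.2.1)).1, (r (t.1, t.2.1)).2, t.2.2)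

/-- `r²³ = id × r`. -/
def r23 {X : Type*} (r : X × X → X × X) : X × X × X → X × X × X :=
  fun t => (t.1, (r (t.2.1, t.2.2)).1, (r (t.2.1, t.2.2)).2)

/-- The braid relation `r¹² ∘ r²³ ∘ r¹² = r²³ ∘ r¹² ∘ r²³`. -/
def IsBraided {X : Type*} (r : X × X → X × X) : Prop :=
  r12 r ∘ r23 r ∘ r12 r = r23 r ∘ r12 r ∘ r23 r

/-- Nondegeneracy: every `σ_x` and every `τ_y` is bijective. -/
def Nondegenerate {X : Type*} (r : X × X → X × X) : Prop :=
  (∀ x, Function.Bijective (sig r x)) ∧ (∀ y, Function.Bijective (tau r y))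

/-- The defining relators of the group `G(X,r)`:
`x · y · (σ_x(y) · τ_y(x))⁻¹` for all `x, y ∈ X`. -/
def ybRels {X : Type*} (r : X × X → X × X) : Set (FreeGroup X) :=
  { w | ∃ x y : X, w = FreeGroup.of x * FreeGroup.of y *
      (FreeGroup.of (sig r x y) * FreeGroup.of (tau r y x))⁻¹ }

/-- The group `G(X,r)` associated with `(X,r)`, presented by generators `X`
and relations `x y = σ_x(y) τ_y(x)`. -/
abbrev YBGroup {X : Type*} (r : X × X → X × X) := PresentedGroup (ybRels r)

/-- The canonical map `ι : X → G(X,r)`. -/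
def ybι {X : Type*} (r : X × X → X × X) : X → YBGroup r := PresentedGroup.of

namespace YBAux

variable {X : Type*} {r : X × X → X × X}

lemma braid_sigma (hbr : IsBraided r) (x y z : X) :
    sig r (sig r x y) (sig r (tau r y x) z) = sig r x (sig r y z) := by
  have h := congrArg Prod.fst (congrFun hbr (x, y, z))
  simpa [r12, r23, sig, tau, Function.comp] using h

lemma sig_invol (hinv : Function.Involutive r) (x y : X) :
    sig r (sig r x y) (tau r y x) = x := by
  have h := congrArg Prod.fst (hinv (x, y))
  simpa [sig, tau] using h

/-- `σ_x` as an equivalence. -/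
noncomputable def sigE (hnd : Nondegenerate r) (x : X) : X ≃ X :=
  Equiv.ofBijective _ (hnd.1 x)

@[simp] lemma sigE_apply (hnd : Nondegenerate r) (x y : X) :
    sigE hnd x y = sig r x y := rfl

/-- The defining relation in `G(X,r)`. -/
lemma yb_rel (x y : X) :
    ybι r x * ybι r y = ybι r (sig r x y) * ybι r (tau r y x) := by
  have hmem : (FreeGroup.of x * FreeGroup.of y *
      (FreeGroup.of (sig r x y) * FreeGroup.of (tau r y x))⁻¹)
      ∈ Subgroup.normalClosure (ybRels r) :=
    Subgroup.subset_normalClosure ⟨x, y, rfl⟩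
  have h1 : PresentedGroup.mk (ybRels r) (FreeGroup.of x * FreeGroup.of y *
      (FreeGroup.of (sig r x y) * FreeGroup.of (tau r y x))⁻¹) = 1 :=
    (QuotientGroup.eq_one_iff _).2 hmem
  rw [map_mul, map_mul, map_inv, map_mul, mul_inv_eq_one] at h1
  exact h1

end YBAux

namespace YBAux

variable {X : Type*} {r : X × X → X × X}

/-- Product of a word in the generators. -/
def wordProd (r : X × X → X × X) (a : List X) : YBGroup r := (a.map (ybι r)).prod

@[simp] lemma wordProd_nil : wordProd r ([] : List X) = 1 := rfl

@[simp] lemma wordProd_cons (x : X) (a : List X) :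
    wordProd r (x :: a) = ybι r x * wordProd r a := by
  simp [wordProd]

lemma wordProd_append (a b : List X) :
    wordProd r (a ++ b) = wordProd r a * wordProd r b := by
  simp [wordProd]

open Classical in
/-- The indicator vector. -/
noncomputable def ev (x : X) : X → ℤ := fun z => if z = x then 1 else 0

open Classical in
lemma ev_apply (x z : X) : ev x z = if z = x then 1 else 0 := rfl

/-- The cocycle value of a word. -/
noncomputable def piL (hnd : Nondegenerate r) : List X → X → ℤ
  | [] => 0
  | u :: t => ev u + fun z => piL hnd t ((sigE hnd u).symm z)

lemma piL_nonneg (hnd : Nondegenerate r) : ∀ (a : List X) (z : X), 0 ≤ piL hnd a z := by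
  intro a
  induction a with
  | nil => intro z; simp [piL]
  | cons u t ih =>
      intro z
      have := ih ((sigE hnd u).symm z)
      simp only [piL, Pi.add_apply, ev_apply]
      split <;> omega

lemma piL_sum [Fintype X] (hnd : Nondegenerate r) :
    ∀ a : List X, ∑ z, piL hnd a z = (a.length : ℤ) := by
  intro a
  induction a with
  | nil => simp [piL]
  | cons u t ih =>
      simp only [piL, Pi.add_apply, Finset.sum_add_distrib, List.length_cons]
      rw [Equiv.sum_comp (sigE hnd u).symm (piL hnd t), ih]
      have : ∑ z, ev u z = 1 := by
        classical
        simp [ev_apply]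
      rw [this]
      push_cast
      ring

end YBAux

namespace YBAux

variable {X : Type*} {r : X × X → X × X}

/-- Permutations act on `ℤ^X` by permuting coordinates. -/
def permAct : Equiv.Perm X →* MulAut (Multiplicative (X → ℤ)) where
  toFun p :=
    { toFun := fun v => Multiplicative.ofAdd (fun z => Multiplicative.toAdd v (p.symm z))
      invFun := fun v => Multiplicative.ofAdd (fun z => Multiplicative.toAdd v (p z))
      left_inv := fun v => by
        apply Multiplicative.toAdd.injective; funext z; simp
      right_inv := fun v => by
        apply Multiplicative.toAdd.injective; funext z; simp
      map_mul' := fun v w => by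
        apply Multiplicative.toAdd.injective; funext z; simp [toAdd_mul] }
  map_one' := by
    ext v
    rfl
  map_mul' := fun p q => by
    ext v
    rfl

@[simp] lemma permAct_apply (p : Equiv.Perm X) (v : X → ℤ) (z : X) :
    Multiplicative.toAdd (permAct p (Multiplicative.ofAdd v)) z = v (p.symm z) := rfl

/-- The target group `ℤ^X ⋊ Sym(X)`. -/
abbrev YBS (X : Type*) := (Multiplicative (X → ℤ)) ⋊[(permAct : Equiv.Perm X →* _)] Equiv.Perm X

/-- The image of a generator in `YBS`. -/
noncomputable def phiGen (hnd : Nondegenerate r) (x : X) : YBS X :=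
  ⟨Multiplicative.ofAdd (ev x), sigE hnd x⟩

lemma ev_comp (hnd : Nondegenerate r) (x y : X) :
    (fun z => ev y ((sigE hnd x).symm z)) = ev (sig r x y) := by
  classical
  funext z
  have : (sigE hnd x).symm z = y ↔ z = sig r x y := by
    rw [Equiv.symm_apply_eq, sigE_apply, eq_comm]
  simp only [ev_apply]
  split <;> split <;> simp_all [this]

lemma phiGen_mul (hnd : Nondegenerate r) (hinv : Function.Involutive r)
    (hbr : IsBraided r) (x y : X) :
    phiGen hnd x * phiGen hnd y =
      phiGen hnd (sig r x y) * phiGen hnd (tau r y x) := by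
  ext
  · refine congrFun (congrArg Multiplicative.toAdd ?_) _
    show Multiplicative.ofAdd (ev x) * permAct (sigE hnd x) (Multiplicative.ofAdd (ev y)) =
      Multiplicative.ofAdd (ev (sig r x y)) *
        permAct (sigE hnd (sig r x y)) (Multiplicative.ofAdd (ev (tau r y x)))
    have h1 : permAct (sigE hnd x) (Multiplicative.ofAdd (ev y)) =
        Multiplicative.ofAdd (ev (sig r x y)) := by
      apply Multiplicative.toAdd.injective
      funext z
      simpa using congrFun (ev_comp hnd x y) z
    have h2 : permAct (sigE hnd (sig r x y)) (Multiplicative.ofAdd (ev (tau r y x))) =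
        Multiplicative.ofAdd (ev x) := by
      apply Multiplicative.toAdd.injective
      funext z
      have := congrFun (ev_comp hnd (sig r x y) (tau r y x)) z
      simpa [sig_invol hinv x y] using this
    rw [h1, h2, mul_comm]
  · show (sigE hnd x * sigE hnd y) _ = (sigE hnd (sig r x y) * sigE hnd (tau r y x)) _
    congr 1
    ext z
    simp only [Equiv.Perm.mul_apply, sigE_apply]
    exact (braid_sigma hbr x y z).symm

/-- The homomorphism `G(X,r) → ℤ^X ⋊ Sym(X)`. -/
noncomputable def Phi (hnd : Nondegenerate r) (hinv : Function.Involutive r)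
    (hbr : IsBraided r) : YBGroup r →* YBS X :=
  PresentedGroup.toGroup (f := phiGen hnd) (by
    rintro w ⟨x, y, rfl⟩
    rw [map_mul, map_mul, map_inv, map_mul, mul_inv_eq_one]
    simp only [FreeGroup.lift_apply_of]
    exact phiGen_mul hnd hinv hbr x y)

@[simp] lemma Phi_of (hnd : Nondegenerate r) (hinv : Function.Involutive r)
    (hbr : IsBraided r) (x : X) : Phi hnd hinv hbr (ybι r x) = phiGen hnd x :=
  PresentedGroup.toGroup.of _

lemma Phi_wordProd_left (hnd : Nondegenerate r) (hinv : Function.Involutive r)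
    (hbr : IsBraided r) (a : List X) :
    (Phi hnd hinv hbr (wordProd r a)).left = Multiplicative.ofAdd (piL hnd a) := by
  induction a with
  | nil =>
      rw [wordProd_nil, map_one]
      simp [piL]
  | cons u t ih =>
      rw [wordProd_cons, map_mul, SemidirectProduct.mul_left, ih, Phi_of]
      show Multiplicative.ofAdd (ev u) * permAct (sigE hnd u) (Multiplicative.ofAdd (piL hnd t))
        = Multiplicative.ofAdd (piL hnd (u :: t))
      apply Multiplicative.toAdd.injective
      funext z
      show ev u z + (piL hnd t) ((sigE hnd u).symm z) = piL hnd (u :: t) z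
      rfl

end YBAux

namespace YBAux

variable {X : Type*} {r : X × X → X × X}

open Classical in
lemma head_lemma (hnd : Nondegenerate r) (hinv : Function.Involutive r) :
    ∀ (a : List X) (x : X), 0 < piL hnd a x →
      ∃ t : List X, t.length + 1 = a.length ∧ wordProd r a = wordProd r (x :: t) := by
  intro a
  induction a with
  | nil => intro x h; simp [piL] at h
  | cons u s ih =>
      intro x h
      by_cases hx : x = u
      · exact ⟨s, rfl, by rw [hx]⟩
      · have h' : 0 < piL hnd s ((sigE hnd u).symm x) := by
          have : piL hnd (u :: s) x = ev u x + piL hnd s ((sigE hnd u).symm x) := rfl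
          rw [this, ev_apply, if_neg hx] at h
          simpa using h
        obtain ⟨t', hlen, hPs⟩ := ih ((sigE hnd u).symm x) h'
        set y := (sigE hnd u).symm x with hy
        refine ⟨tau r y u :: t', ?_, ?_⟩
        · simp [← hlen]
        · have hxy : sig r u y = x := by
            have h5 := (sigE hnd u).apply_symm_apply x
            rw [← hy] at h5
            rw [← sigE_apply hnd, h5]
          rw [wordProd_cons, hPs, wordProd_cons, ← mul_assoc, yb_rel u y, hxy,
            wordProd_cons, wordProd_cons, mul_assoc]

lemma piL_eq_of_wordProd_eq (hnd : Nondegenerate r) (hinv : Function.Involutive r)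
    (hbr : IsBraided r) {a b : List X} (h : wordProd r a = wordProd r b) :
    piL hnd a = piL hnd b := by
  have := congrArg SemidirectProduct.left (congrArg (Phi hnd hinv hbr) h)
  rw [Phi_wordProd_left hnd hinv hbr, Phi_wordProd_left hnd hinv hbr] at this
  exact Multiplicative.ofAdd.injective this

lemma nil_of_piL_eq_zero [Fintype X] (hnd : Nondegenerate r) {a : List X}
    (h : piL hnd a = 0) : a = [] := by
  have hs := piL_sum hnd a
  rw [h] at hs
  simp at hs
  have : a.length = 0 := by exact_mod_cast hs.symm
  exact List.length_eq_zero_iff.mp this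

lemma main_lemma [Fintype X] (hnd : Nondegenerate r) (hinv : Function.Involutive r)
    (hbr : IsBraided r) :
    ∀ (n : ℕ) (a b : List X), a.length ≤ n → piL hnd a = piL hnd b →
      wordProd r a = wordProd r b := by
  intro n
  induction n with
  | zero =>
      intro a b ha h
      have ha' : a = [] := List.length_eq_zero_iff.mp (Nat.le_zero.mp ha)
      subst ha'
      have : b = [] := nil_of_piL_eq_zero hnd (by rw [← h]; rfl)
      rw [this]
  | succ n ih =>
      intro a b ha h
      cases b with
      | nil =>
          have : a = [] := nil_of_piL_eq_zero hnd (by rw [h]; rfl)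
          rw [this]
      | cons x tb =>
          have hpos : 0 < piL hnd a x := by
            rw [h]
            have h1 : piL hnd (x :: tb) x = ev x x + piL hnd tb ((sigE hnd x).symm x) := rfl
            have h2 : ev x x = 1 := by classical simp [ev_apply]
            have := piL_nonneg hnd tb ((sigE hnd x).symm x)
            omega
          obtain ⟨t, hlen, hPa⟩ := head_lemma hnd hinv a x hpos
          have hpi : piL hnd (x :: t) = piL hnd (x :: tb) := by
            rw [← piL_eq_of_wordProd_eq hnd hinv hbr hPa, h]
          have hpit : piL hnd t = piL hnd tb := by
            funext z
            have := congrFun hpi (sig r x z)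
            have e1 : piL hnd (x :: t) (sig r x z) =
                ev x (sig r x z) + piL hnd t ((sigE hnd x).symm (sig r x z)) := rfl
            have e2 : piL hnd (x :: tb) (sig r x z) =
                ev x (sig r x z) + piL hnd tb ((sigE hnd x).symm (sig r x z)) := rfl
            have e3 : (sigE hnd x).symm (sig r x z) = z := (sigE hnd x).symm_apply_apply z
            rw [e1, e2, e3] at this
            omega
          have htlen : t.length ≤ n := by
            have : a.length ≤ n + 1 := ha
            omega
          have := ih t tb htlen hpit
          rw [hPa, wordProd_cons, wordProd_cons, this]

end YBAux

namespace YBAux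

variable {X : Type*} {r : X × X → X × X}

lemma inv_push_letter (hnd : Nondegenerate r) :
    ∀ (c : List X) (x : X), ∃ (c' : List X) (x' : X),
      (ybι r x)⁻¹ * wordProd r c = wordProd r c' * (ybι r x')⁻¹ := by
  intro c
  induction c with
  | nil => intro x; exact ⟨[], x, by simp⟩
  | cons z t ih =>
      intro x
      set y := (sigE hnd x).symm z with hy
      have hz : sig r x y = z := by
        have h5 := (sigE hnd x).apply_symm_apply z
        rw [← hy] at h5
        rw [← sigE_apply hnd, h5]
      have h6 : ybι r x * ybι r y = ybι r z * ybι r (tau r y x) := by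
        rw [yb_rel x y, hz]
      have hrel : (ybι r x)⁻¹ * ybι r z = ybι r y * (ybι r (tau r y x))⁻¹ := by
        calc (ybι r x)⁻¹ * ybι r z
            = (ybι r x)⁻¹ * (ybι r z * ybι r (tau r y x)) * (ybι r (tau r y x))⁻¹ := by group
          _ = (ybι r x)⁻¹ * (ybι r x * ybι r y) * (ybι r (tau r y x))⁻¹ := by rw [← h6]
          _ = ybι r y * (ybι r (tau r y x))⁻¹ := by group
      obtain ⟨c₂, x₂, h2⟩ := ih (tau r y x)
      refine ⟨y :: c₂, x₂, ?_⟩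
      rw [wordProd_cons, ← mul_assoc, hrel, mul_assoc, h2, wordProd_cons]
      group

lemma inv_push (hnd : Nondegenerate r) :
    ∀ (b c : List X), ∃ (c' b' : List X),
      (wordProd r b)⁻¹ * wordProd r c = wordProd r c' * (wordProd r b')⁻¹ := by
  intro b
  induction b with
  | nil => intro c; exact ⟨c, [], by simp⟩
  | cons x t ih =>
      intro c
      obtain ⟨c₂, x₂, h2⟩ := inv_push_letter hnd c x
      obtain ⟨c₃, b₃, h3⟩ := ih c₂
      refine ⟨c₃, x₂ :: b₃, ?_⟩
      rw [wordProd_cons, mul_inv_rev, mul_assoc, h2, ← mul_assoc, h3,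
        wordProd_cons, mul_inv_rev]
      group

/-- The set of fractions of positive words is a subgroup. -/
noncomputable def fracSubgroup (r : X × X → X × X) (hnd : Nondegenerate r) :
    Subgroup (YBGroup r) where
  carrier := {g | ∃ a b : List X, g = wordProd r a * (wordProd r b)⁻¹}
  one_mem' := ⟨[], [], by simp⟩
  inv_mem' := by
    rintro g ⟨a, b, rfl⟩
    exact ⟨b, a, by group⟩
  mul_mem' := by
    rintro g h ⟨a, b, rfl⟩ ⟨c, d, rfl⟩
    obtain ⟨c', b', hcb⟩ := inv_push hnd b c
    refine ⟨a ++ c', d ++ b', ?_⟩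
    rw [wordProd_append, wordProd_append, mul_inv_rev]
    calc wordProd r a * (wordProd r b)⁻¹ * (wordProd r c * (wordProd r d)⁻¹)
        = wordProd r a * ((wordProd r b)⁻¹ * wordProd r c) * (wordProd r d)⁻¹ := by group
      _ = wordProd r a * (wordProd r c' * (wordProd r b')⁻¹) * (wordProd r d)⁻¹ := by rw [hcb]
      _ = wordProd r a * wordProd r c' * ((wordProd r b')⁻¹ * (wordProd r d)⁻¹) := by group

lemma exists_frac (hnd : Nondegenerate r) (g : YBGroup r) :
    ∃ a b : List X, g = wordProd r a * (wordProd r b)⁻¹ :=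
  PresentedGroup.generated_by (ybRels r) (fracSubgroup r hnd)
    (fun j => ⟨[j], [], by simp [wordProd]; rfl⟩) g

lemma Phi_injective [Fintype X] (hnd : Nondegenerate r) (hinv : Function.Involutive r)
    (hbr : IsBraided r) : Function.Injective (Phi hnd hinv hbr) := by
  rw [injective_iff_map_eq_one]
  intro g hg
  obtain ⟨a, b, rfl⟩ := exists_frac hnd g
  rw [mul_inv_eq_one]
  have hPhi : Phi hnd hinv hbr (wordProd r a) = Phi hnd hinv hbr (wordProd r b) := by
    rw [← mul_inv_eq_one, ← map_inv, ← map_mul]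
    exact hg
  have hleft := congrArg SemidirectProduct.left hPhi
  rw [Phi_wordProd_left hnd hinv hbr, Phi_wordProd_left hnd hinv hbr] at hleft
  exact main_lemma hnd hinv hbr a.length a b le_rfl (Multiplicative.ofAdd.injective hleft)

end YBAux

namespace YBAux

/-- Extension lemma: if the intersection with the kernel and the image of a subgroup
are finitely generated, so is the subgroup. -/
lemma fg_of_ker_map {G Q : Type*} [Group G] [Group Q] (f : G →* Q) (H : Subgroup G)
    (h1 : (H ⊓ f.ker).FG) (h2 : (H.map f).FG) : H.FG := by
  rw [Subgroup.fg_iff] at h1 h2 ⊢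
  obtain ⟨S, hS, hSfin⟩ := h1
  obtain ⟨T, hT, hTfin⟩ := h2
  have hTsub : T ⊆ f '' (H : Set G) := by
    intro t ht
    have : t ∈ H.map f := by rw [← hT]; exact Subgroup.subset_closure ht
    obtain ⟨g, hg, rfl⟩ := this
    exact ⟨g, hg, rfl⟩
  choose pre hpre hfpre using fun t (ht : t ∈ T) => hTsub ht
  classical
  set T₀ : Set G := {g | ∃ t : T, ∃ ht : (t : Q) ∈ T, g = pre t ht} with hT₀
  have hT₀fin : T₀.Finite := by
    haveI := hTfin.to_subtype
    have : T₀ ⊆ Set.range (fun p : T => pre p.1 (by exact p.2)) := by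
      rintro g ⟨t, ht, rfl⟩
      exact ⟨t, rfl⟩
    exact Set.Finite.subset (Set.finite_range _) this
  have hT₀sub : T₀ ⊆ (H : Set G) := by
    rintro g ⟨t, ht, rfl⟩
    exact hpre t ht
  have hfT₀ : f '' T₀ = T := by
    apply Set.Subset.antisymm
    · rintro q ⟨g, ⟨t, ht, rfl⟩, rfl⟩
      rw [hfpre t ht]
      exact ht
    · intro t ht
      exact ⟨pre t ht, ⟨⟨t, ht⟩, ht, rfl⟩, hfpre t ht⟩
  refine ⟨S ∪ T₀, ?_, hSfin.union hT₀fin⟩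
  apply le_antisymm
  · rw [Subgroup.closure_le]
    apply Set.union_subset
    · intro s hs
      have : s ∈ H ⊓ f.ker := by rw [← hS]; exact Subgroup.subset_closure hs
      exact this.1
    · exact hT₀sub
  · intro h hh
    have hfh : f h ∈ Subgroup.closure T := by
      rw [hT]
      exact Subgroup.mem_map.2 ⟨h, hh, rfl⟩
    rw [← hfT₀, ← MonoidHom.map_closure] at hfh
    obtain ⟨u, hu, hfu⟩ := Subgroup.mem_map.1 hfh
    have huH : u ∈ H := by
      have : Subgroup.closure T₀ ≤ H := by
        rw [Subgroup.closure_le]; exact hT₀sub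
      exact this hu
    have hker : h * u⁻¹ ∈ H ⊓ f.ker := by
      refine Subgroup.mem_inf.2 ⟨H.mul_mem hh (H.inv_mem huH), ?_⟩
      rw [MonoidHom.mem_ker, map_mul, map_inv, hfu, mul_inv_cancel]
    have h1 : h * u⁻¹ ∈ Subgroup.closure (S ∪ T₀) := by
      have : h * u⁻¹ ∈ Subgroup.closure S := by rw [hS]; exact hker
      exact Subgroup.closure_mono Set.subset_union_left this
    have h2 : u ∈ Subgroup.closure (S ∪ T₀) :=
      Subgroup.closure_mono Set.subset_union_right hu
    have := Subgroup.mul_mem _ h1 h2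
    simpa using this

/-- Every subgroup of `Multiplicative (X → ℤ)` (for `X` finite) is finitely generated. -/
lemma mult_pi_fg {X : Type*} [Fintype X] (P : Subgroup (Multiplicative (X → ℤ))) : P.FG := by
  set Q : AddSubgroup (X → ℤ) := Subgroup.toAddSubgroup' P with hQ
  have hmod : (AddSubgroup.toIntSubmodule Q).FG :=
    IsNoetherian.noetherian _
  have hQfg : Q.FG := by
    have := (Submodule.fg_iff_addSubgroup_fg (AddSubgroup.toIntSubmodule Q)).1 hmod
    rwa [AddSubgroup.toIntSubmodule_toAddSubgroup] at this
  have := (AddSubgroup.fg_iff_mul_fg Q).1 hQfg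
  rwa [show Q.toSubgroup = P from AddSubgroup.toSubgroup.apply_symm_apply P] at this

/-- Subgroups that are finitely generated map to finitely generated subgroups. -/
lemma fg_map {G Q : Type*} [Group G] [Group Q] (f : G →* Q) {H : Subgroup G}
    (h : H.FG) : (H.map f).FG := by
  rw [Subgroup.fg_iff] at h ⊢
  obtain ⟨S, hS, hfin⟩ := h
  exact ⟨f '' S, by rw [← MonoidHom.map_closure, hS], hfin.image f⟩

end YBAux

namespace YBAux

lemma fg_bot {G : Type*} [Group G] : (⊥ : Subgroup G).FG :=
  (Subgroup.fg_iff _).2 ⟨∅, Subgroup.closure_empty, Set.finite_empty⟩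

lemma fg_of_finite {G : Type*} [Group G] [Finite G] (H : Subgroup G) : H.FG :=
  (Subgroup.fg_iff _).2 ⟨(H : Set G), Subgroup.closure_eq H, Set.toFinite _⟩

/-- Every subgroup of `ℤ^X ⋊ Sym(X)` is finitely generated. -/
lemma noeth_YBS {X : Type*} [Fintype X] (H : Subgroup (YBS X)) : H.FG := by
  apply fg_of_ker_map SemidirectProduct.rightHom H
  · set K := H ⊓ (SemidirectProduct.rightHom :
      YBS X →* Equiv.Perm X).ker with hK
    have hKle : K ≤ (SemidirectProduct.inl :
        Multiplicative (X → ℤ) →* YBS X).range := by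
      rw [SemidirectProduct.range_inl_eq_ker_rightHom]
      exact inf_le_right
    have : K = (K.comap (SemidirectProduct.inl :
        Multiplicative (X → ℤ) →* YBS X)).map SemidirectProduct.inl := by
      rw [Subgroup.map_comap_eq]
      exact (inf_eq_right.2 hKle).symm
    rw [this]
    exact fg_map _ (mult_pi_fg _)
  · exact fg_of_finite _

end YBAux

/-- For a finite square-free solution `(X,r)`, the group
`G(X,r)` is Noetherian: every subgroup is finitely generated. -/
theorem G_noetherian_group {X : Type*} [Fintype X] (r : X × X → X × X)
    (hnd : Nondegenerate r) (hinv : Function.Involutive r) (hbr : IsBraided r)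
    (hsf : ∀ x : X, r (x, x) = (x, x)) :
    ∀ H : Subgroup (YBGroup r), H.FG := by
  intro H
  have hinj := YBAux.Phi_injective hnd hinv hbr
  apply YBAux.fg_of_ker_map (YBAux.Phi hnd hinv hbr) H
  · rw [(MonoidHom.ker_eq_bot_iff _).2 hinj, inf_bot_eq]
    exact YBAux.fg_bot
  · exact YBAux.noeth_YBS _
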